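/- For a finite set X with an action of a finite group G that is a subgroup of a finite group H, the orbifold Euler characteristic is induction-invariant: χ^(1)(Ind_G^H X, H) = χ^(1)(X, G), where Ind_G^H X = (H × X)/∼ with (h,x) ∼ (hg, g⁻¹x) for g ∈ G, and H acts by h₀·[(h,x)] = [(h₀h, x)]. -/

import Mathlib

/-- The centralizer of `g` acts on the fixed-point set of `g`. -/
instance fixedByCentralizerAction {G : Type} [Group G] (X : Type) [MulAction G X] (g : G) :
    MulAction (Subgroup.centralizer ({g} : Set G)) (MulAction.fixedBy X g) where
  smul h x := ⟨(h : G) • (x : X), by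
    have hc : g * (h : G) = (h : G) * g :=
      Subgroup.mem_centralizer_iff.mp h.2 g (Set.mem_singleton g)
    have hx : g • (x : X) = (x : X) := x.2
    simp only [MulAction.mem_fixedBy]
    rw [← mul_smul, hc, mul_smul, hx]⟩
  one_smul x := Subtype.ext (one_smul G (x : X))
  mul_smul a b x := Subtype.ext (mul_smul (a : G) (b : G) (x : X))

/-- The order-`k` (orbifold) Euler characteristic of a `G`-set `X`. -/
noncomputable def chiOrb : ℕ → (X : Type) → (G : Type) → [Group G] → [MulAction G X] → ℕ
  | 0, X, G, _, _ => Nat.card (MulAction.orbitRel.Quotient G X)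
  | k + 1, X, G, _, _ => ∑ᶠ c : ConjClasses G,
      chiOrb k (MulAction.fixedBy X (Quotient.out c))
        (Subgroup.centralizer ({Quotient.out c} : Set G))

section LamSec
variable (K : Type) [Group K] (Y : Type) [MulAction K Y]

def Lam : Type := {p : K × Y // p.1 • p.2 = p.2}

instance lamAction : MulAction K (Lam K Y) where
  smul k p := ⟨(k * p.1.1 * k⁻¹, k • p.1.2), by
    have hp : p.1.1 • p.1.2 = p.1.2 := p.2
    show (k * p.1.1 * k⁻¹) • k • p.1.2 = k • p.1.2
    rw [smul_smul, mul_assoc, inv_mul_cancel, mul_one, mul_smul, hp]⟩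
  one_smul p := Subtype.ext
    (show ((1:K) * p.1.1 * (1:K)⁻¹, (1:K) • p.1.2) = p.1 by simp)
  mul_smul a b p := Subtype.ext
    (show ((a*b) * p.1.1 * (a*b)⁻¹, (a*b) • p.1.2)
        = (a * (b * p.1.1 * b⁻¹) * a⁻¹, a • b • p.1.2) by
      simp [mul_assoc, mul_smul])

@[simp] lemma lam_smul_coe (k : K) (p : Lam K Y) :
    (k • p).1 = (k * p.1.1 * k⁻¹, k • p.1.2) := rfl

lemma conj_mk_out {c : ConjClasses K} : ConjClasses.mk (Quotient.out c) = c := by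
  rw [← ConjClasses.quotient_mk_eq_mk]; exact Quotient.out_eq c

/-- Underlying map to the inertia set. -/
noncomputable def lamOf (c : ConjClasses K) (y : MulAction.fixedBy Y (Quotient.out c)) : Lam K Y :=
  ⟨(Quotient.out c, (y : Y)), y.2⟩

lemma lamOf_rel (c : ConjClasses K) (y y' : MulAction.fixedBy Y (Quotient.out c))
    (h : Setoid.r (self := MulAction.orbitRel
        (Subgroup.centralizer ({Quotient.out c} : Set K))
        (MulAction.fixedBy Y (Quotient.out c))) y y') :
    Setoid.r (self := MulAction.orbitRel K (Lam K Y)) (lamOf K Y c y) (lamOf K Y c y') := by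
  obtain ⟨z, hz⟩ := h
  refine ⟨z.1, Subtype.ext (Prod.ext ?_ ?_)⟩
  · have hcz : Quotient.out c * z.1 = z.1 * Quotient.out c :=
      Subgroup.mem_centralizer_iff.mp z.2 _ (Set.mem_singleton _)
    show z.1 * Quotient.out c * z.1⁻¹ = Quotient.out c
    rw [← hcz, mul_assoc, mul_inv_cancel, mul_one]
  · exact congrArg Subtype.val hz

/-- The comparison map from the sigma-type of centralizer quotients of fixed sets
to the quotient of the inertia set. -/
noncomputable def psi :
    (Σ c : ConjClasses K,
      MulAction.orbitRel.Quotient (Subgroup.centralizer ({Quotient.out c} : Set K))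
        (MulAction.fixedBy Y (Quotient.out c))) →
    MulAction.orbitRel.Quotient K (Lam K Y) :=
  fun p => Quotient.map' (lamOf K Y p.1) (lamOf_rel K Y p.1) p.2

@[simp] lemma psi_mk (c : ConjClasses K) (y : MulAction.fixedBy Y (Quotient.out c)) :
    psi K Y ⟨c, Quotient.mk'' y⟩ = Quotient.mk'' (lamOf K Y c y) := rfl

lemma psi_bijective : Function.Bijective (psi K Y) := by
  constructor
  · rintro ⟨c, q⟩ ⟨c', q'⟩ h
    induction q using Quotient.inductionOn' with
    | h y =>
      induction q' using Quotient.inductionOn' with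
      | h y' =>
        rw [psi_mk, psi_mk] at h
        obtain ⟨k, hk⟩ := Quotient.exact' h
        have hk1 : k * Quotient.out c' * k⁻¹ = Quotient.out c :=
          congrArg (fun p => p.1.1) hk
        have hk2 : k • (y' : Y) = (y : Y) := congrArg (fun p => p.1.2) hk
        have hcc : c' = c := by
          rw [← conj_mk_out (c := c'), ← conj_mk_out (c := c)]
          exact ConjClasses.mk_eq_mk_iff_isConj.mpr (isConj_iff.mpr ⟨k, hk1⟩)
        subst hcc
        have hkc : k ∈ Subgroup.centralizer ({Quotient.out c'} : Set K) := by
          refine Subgroup.mem_centralizer_iff.mpr ?_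
          intro g hg
          rw [Set.mem_singleton_iff] at hg
          subst hg
          have h2 := hk1
          rw [mul_inv_eq_iff_eq_mul] at h2
          exact h2.symm
        exact congrArg (Sigma.mk c') (Quotient.sound' ⟨⟨k, hkc⟩, Subtype.ext hk2⟩)
  · intro q
    induction q using Quotient.inductionOn' with
    | h p =>
      obtain ⟨⟨g, y⟩, hy⟩ := p
      have hy' : g • y = y := hy
      set c := ConjClasses.mk g with hc
      have : IsConj (Quotient.out c) g := by
        rw [← ConjClasses.mk_eq_mk_iff_isConj, conj_mk_out]
      obtain ⟨k, hkk⟩ := isConj_iff.mp this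
      have hout : Quotient.out c = k⁻¹ * g * k := by rw [← hkk]; group
      have hfix : Quotient.out c • (k⁻¹ • y) = k⁻¹ • y := by
        rw [hout, mul_smul, smul_smul k k⁻¹, mul_inv_cancel, one_smul, mul_smul, hy']
      refine ⟨⟨c, Quotient.mk'' (⟨k⁻¹ • y, hfix⟩ :
        MulAction.fixedBy Y (Quotient.out c))⟩, ?_⟩
      rw [psi_mk]
      refine Quotient.sound' ⟨k⁻¹, Subtype.ext (Prod.ext ?_ ?_)⟩
      · show k⁻¹ * g * k⁻¹⁻¹ = Quotient.out c
        rw [inv_inv, ← hkk]; group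
      · rfl

theorem chiOrb_one_eq [Finite K] [Finite Y] :
    chiOrb 1 Y K = Nat.card (MulAction.orbitRel.Quotient K (Lam K Y)) := by
  classical
  have h1 : chiOrb 1 Y K = ∑ᶠ c : ConjClasses K,
      Nat.card (MulAction.orbitRel.Quotient
        (Subgroup.centralizer ({Quotient.out c} : Set K))
        (MulAction.fixedBy Y (Quotient.out c))) := by
    simp [chiOrb]
  rw [h1, ← Nat.card_congr (Equiv.ofBijective _ (psi_bijective K Y))]
  letI : Fintype (ConjClasses K) := Fintype.ofFinite _
  letI : ∀ c : ConjClasses K, Fintype (MulAction.orbitRel.Quotient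
      (Subgroup.centralizer ({Quotient.out c} : Set K))
      (MulAction.fixedBy Y (Quotient.out c))) := fun c => Fintype.ofFinite _
  rw [finsum_eq_sum_of_fintype, Nat.card_eq_fintype_card, Fintype.card_sigma]
  simp [Nat.card_eq_fintype_card]

end LamSec

variable {H : Type} [Group H] (G : Subgroup H) (X : Type) [MulAction G X]

/-- The equivalence relation on `H × X` with `(h,x) ∼ (hg, g⁻¹x)` for `g ∈ G`. -/
def indSetoid : Setoid (H × X) where
  r p q := ∃ g : G, q.1 = p.1 * (g : H) ∧ q.2 = g⁻¹ • p.2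
  iseqv := by
    constructor
    · intro p; exact ⟨1, by simp⟩
    · rintro p q ⟨g, h1, h2⟩
      exact ⟨g⁻¹, by simp [h1, mul_assoc], by simp [h2]⟩
    · rintro p q r ⟨g, h1, h2⟩ ⟨g', h1', h2'⟩
      exact ⟨g * g', by simp [h1', h1, mul_assoc], by simp [h2', h2, mul_smul]⟩

/-- The induced `H`-set `Ind_G^H X = (H × X)/∼`. -/
def IndSet : Type := Quotient (indSetoid G X)

instance indSetMulAction : MulAction H (IndSet G X) where
  smul h := Quotient.map (fun p => (h * p.1, p.2))
    (by rintro p q ⟨g, h1, h2⟩; exact ⟨g, by simp [h1, mul_assoc], h2⟩)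
  one_smul := by
    rintro ⟨p⟩
    exact Quotient.sound ⟨1, by simp⟩
  mul_smul a b := by
    rintro ⟨p⟩
    exact Quotient.sound ⟨1, by simp [mul_assoc]⟩

/-- Constructor for `IndSet`. -/
def mkInd (p : H × X) : IndSet G X := Quotient.mk (indSetoid G X) p

lemma indSet_smul_mk (h : H) (p : H × X) :
    h • mkInd G X p = mkInd G X (h * p.1, p.2) := rfl

lemma indSet_mk_mul (s : H) (g : G) (x : X) :
    mkInd G X (s * (g : H), x) = mkInd G X (s, g • x) := by
  exact Quotient.sound ⟨g⁻¹, by simp [mul_assoc], by simp⟩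

/-- The comparison map on inertia sets for induction. -/
noncomputable def phi (p : Lam (↥G) X) : Lam H (IndSet G X) :=
  ⟨((p.1.1 : H), Quotient.mk (indSetoid G X) (1, p.1.2)), by
    show (p.1.1 : H) • mkInd G X (1, p.1.2)
        = mkInd G X (1, p.1.2)
    rw [indSet_smul_mk, mul_one]
    have h2 := indSet_mk_mul G X 1 p.1.1 p.1.2
    rw [one_mul, p.2] at h2
    exact h2⟩

lemma phi_rel (p q : Lam (↥G) X)
    (h : Setoid.r (self := MulAction.orbitRel (↥G) (Lam (↥G) X)) p q) :
    Setoid.r (self := MulAction.orbitRel H (Lam H (IndSet G X))) (phi G X p) (phi G X q) := by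
  obtain ⟨z, hz⟩ := h
  refine ⟨(z : H), Subtype.ext (Prod.ext ?_ ?_)⟩
  · have h1 : z * q.1.1 * z⁻¹ = p.1.1 := congrArg (fun r => r.1.1) hz
    show (z : H) * (q.1.1 : H) * (z : H)⁻¹ = (p.1.1 : H)
    exact_mod_cast congrArg (fun a : ↥G => (a : H)) h1
  · have h2 : z • q.1.2 = p.1.2 := congrArg (fun r => r.1.2) hz
    show (z : H) • mkInd G X (1, q.1.2)
        = mkInd G X (1, p.1.2)
    rw [indSet_smul_mk, mul_one]
    have h3 := indSet_mk_mul G X 1 z q.1.2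
    rw [one_mul, h2] at h3
    exact h3

/-- The comparison map on quotients. -/
noncomputable def Phi : MulAction.orbitRel.Quotient (↥G) (Lam (↥G) X) →
    MulAction.orbitRel.Quotient H (Lam H (IndSet G X)) :=
  Quotient.map' (phi G X) (phi_rel G X)

@[simp] lemma Phi_mk (p : Lam (↥G) X) :
    Phi G X (Quotient.mk'' p) = Quotient.mk'' (phi G X p) := rfl

lemma Phi_bijective : Function.Bijective (Phi G X) := by
  constructor
  · intro a b hab
    induction a using Quotient.inductionOn' with
    | h p =>
      induction b using Quotient.inductionOn' with
      | h q =>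
        rw [Phi_mk, Phi_mk] at hab
        obtain ⟨h₀, hh⟩ := Quotient.exact' hab
        have h1 : h₀ * (q.1.1 : H) * h₀⁻¹ = (p.1.1 : H) := congrArg (fun r => r.1.1) hh
        have h2 : h₀ • mkInd G X (1, q.1.2)
            = mkInd G X (1, p.1.2) := congrArg (fun r => r.1.2) hh
        rw [indSet_smul_mk, mul_one] at h2
        obtain ⟨w, hw1, hw2⟩ := Quotient.exact h2
        have hh₀ : h₀ = (w : H)⁻¹ := eq_inv_of_mul_eq_one_left hw1.symm
        refine Quotient.sound' ⟨w⁻¹, Subtype.ext (Prod.ext ?_ ?_)⟩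
        · refine Subtype.coe_injective ?_
          rw [hh₀, inv_inv] at h1
          show ((w⁻¹ * q.1.1 * w⁻¹⁻¹ : ↥G) : H) = ((p.1.1 : ↥G) : H)
          rw [inv_inv]
          push_cast
          exact h1
        · exact hw2.symm
  · intro b
    induction b using Quotient.inductionOn' with
    | h p =>
      obtain ⟨⟨h, ξ⟩, hfix⟩ := p
      obtain ⟨⟨s, x⟩, rfl⟩ := Quotient.exists_rep ξ
      have hfix' : h • mkInd G X (s, x)
          = mkInd G X (s, x) := hfix
      rw [indSet_smul_mk] at hfix'
      obtain ⟨w, hw1, hw2⟩ := Quotient.exact hfix'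
      have hg : (w⁻¹ : ↥G) • x = x := hw2.symm
      refine ⟨Quotient.mk'' ⟨((w⁻¹ : ↥G), x), hg⟩, ?_⟩
      show Quotient.mk'' (phi G X ⟨((w⁻¹ : ↥G), x), hg⟩) = _
      refine Quotient.sound' ⟨s⁻¹, Subtype.ext (Prod.ext ?_ ?_)⟩
      · show s⁻¹ * h * s⁻¹⁻¹ = ((w⁻¹ : ↥G) : H)
        rw [inv_inv]
        have hw : (w : H) = (h * s)⁻¹ * s := eq_inv_mul_iff_mul_eq.mpr hw1.symm
        push_cast
        rw [hw]
        group
      · show s⁻¹ • mkInd G X (s, x)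
            = mkInd G X (1, x)
        rw [indSet_smul_mk, inv_mul_cancel]

/-- Induction invariance of the orbifold Euler characteristic:
`χ⁽¹⁾(Ind_G^H X, H) = χ⁽¹⁾(X, G)`. -/
theorem chiOrb_one_ind [Finite H] [Finite X] :
    chiOrb 1 (IndSet G X) H = chiOrb 1 X G := by
  haveI : Finite (IndSet G X) := Quotient.finite _
  rw [chiOrb_one_eq H (IndSet G X), chiOrb_one_eq (↥G) X]
  exact (Nat.card_congr (Equiv.ofBijective _ (Phi_bijective G X))).symm
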